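/- If L is a finite meet-semilattice and X an element of L \ {0̂}, then the combinatorial blowup Bl_X(L) is again a meet-semilattice. -/

import Mathlib

open scoped BigOperators

variable {L : Type*}

/-- The set of maximal elements of `G` below `X` (the `G`-factors of `X`). -/
def factorsSet [PartialOrder L] (G : Set L) (X : L) : Set L :=
  {g | g ∈ G ∧ g ≤ X ∧ ∀ h ∈ G, h ≤ X → g ≤ h → g = h}

/-- `G` is a building set in the meet-semilattice `L` with minimal element `⊥`:
every element of `G` is nonminimal, and for every `X ≠ ⊥` there is a poset
isomorphism from the product of the lower intervals of the factors of `X`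
to the lower interval of `X`, sending the `g`-th "unit vector" to `g`. -/
def IsBuilding (L : Type*) [PartialOrder L] [OrderBot L] (G : Set L) : Prop :=
  (∀ g ∈ G, g ≠ ⊥) ∧
  ∀ X : L, X ≠ ⊥ →
    ∃ φ : ((g : factorsSet G X) → Set.Icc (⊥ : L) g.1) ≃o Set.Icc (⊥ : L) X,
      ∀ (g : factorsSet G X) (u : (h : factorsSet G X) → Set.Icc (⊥ : L) h.1),
        (u g : L) = g.1 → (∀ h, h ≠ g → (u h : L) = (⊥ : L)) → ((φ u : L) = g.1)

/-- A finite subset `S ⊆ G` is nested: every antichain in `S` of size at least 2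
has a least upper bound in `L` which does not belong to `G`. -/
def IsNested [PartialOrder L] (G : Set L) (S : Finset L) : Prop :=
  ↑S ⊆ G ∧ ∀ A : Finset L, A ⊆ S → IsAntichain (· ≤ ·) (A : Set L) → 2 ≤ A.card →
    ∃ j, IsLUB (A : Set L) j ∧ j ∉ G

/-- The nested set complex, as the collection of its faces. -/
def nestedComplex [PartialOrder L] (G : Set L) : Set (Finset L) := {S | IsNested G S}

/-- The order complex of a poset: the collection of finite chains. -/
def chainComplex (V : Type*) [Preorder V] : Set (Finset V) :=
  {S | IsChain (· ≤ ·) (S : Set V)}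

/-- The order complex of `L \ {⊥}`, with vertex set inside `L`. -/
def orderComplexBot (L : Type*) [PartialOrder L] [OrderBot L] : Set (Finset L) :=
  {S | (S : Set L) ⊆ {x | x ≠ ⊥} ∧ IsChain (· ≤ ·) (S : Set L)}

/-- Geometric realization of an abstract simplicial complex (given by its set of
faces, as finsets of the vertex type `V`): convex combinations of vertices
supported on a face. -/
abbrev geomReal {V : Type*} (K : Set (Finset V)) : Type _ :=
  {f : V → ℝ // (∀ v, 0 ≤ f v) ∧ ∃ s ∈ K, (∀ v, f v ≠ 0 → v ∈ s) ∧ ∑ v ∈ s, f v = 1}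

/-- The subposet of the face poset of the nested set complex consisting of the
nonempty nested sets whose join is `≤ X`. -/
def NestedFiber [PartialOrder L] (G : Set L) (X : L) :=
  {S : Finset L // IsNested G S ∧ S.Nonempty ∧ ∃ j, IsLUB (S : Set L) j ∧ j ≤ X}

instance [PartialOrder L] (G : Set L) (X : L) : PartialOrder (NestedFiber G X) := by
  unfold NestedFiber; infer_instance

/-- The face poset of the nested set complex: nonempty nested sets ordered by inclusion. -/
def NestedFaces [PartialOrder L] (G : Set L) :=
  {S : Finset L // IsNested G S ∧ S.Nonempty}

instance [PartialOrder L] (G : Set L) : PartialOrder (NestedFaces G) := by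
  unfold NestedFaces; infer_instance

/-- The combinatorial blowup of a poset `M` at `X`: elements `Y` (marked `false`)
with `Y ≱ X`, and elements `Ŷ` (marked `true`) with `Y ≱ X` such that `Y ∨ X`
exists; ordered by `Y ≺ Z` iff `Y < Z`, `Ŷ ≺ Ẑ` iff `Y < Z`, `Y ≺ Ẑ` iff `Y ≤ Z`. -/
def Bl {M : Type*} [PartialOrder M] (X : M) :=
  {p : M × Bool // ¬ X ≤ p.1 ∧ (p.2 = true → ∃ j, IsLUB {p.1, X} j)}

noncomputable instance {M : Type*} [PartialOrder M] (X : M) : PartialOrder (Bl X) := by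
  unfold Bl; infer_instance

/-- The atoms of `L`, used as coordinates for the realization of nested set fans. -/
def Atoms (L : Type*) [PartialOrder L] [OrderBot L] := {a : L // IsAtom a}

open Classical in
/-- The characteristic vector of the set of atoms below `X`. -/
noncomputable def charVec [PartialOrder L] [OrderBot L] (X : L) : Atoms L → ℝ :=
  fun a => if a.1 ≤ X then 1 else 0

/-- The polyhedral cone spanned by the characteristic vectors of elements of `S`. -/
noncomputable def coneOf [PartialOrder L] [OrderBot L] (S : Finset L) : Set (Atoms L → ℝ) :=
  {y | ∃ c : L → ℝ, (∀ x, 0 ≤ c x) ∧ y = ∑ x ∈ S, c x • charVec x}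

/-- The fan associated to a building set: the cones spanned by the nested sets. -/
def fanOf [PartialOrder L] [OrderBot L] (G : Set L) : Set (Set (Atoms L → ℝ)) :=
  {C | ∃ S : Finset L, IsNested G S ∧ C = coneOf S}

/-- The cone generated by a ray `v` together with a cone `c`. -/
def rayJoin {E : Type*} [AddCommMonoid E] [Module ℝ E] (v : E) (c : Set E) : Set E :=
  {y | ∃ a : ℝ, ∃ x ∈ c, 0 ≤ a ∧ y = a • v + x}

/-- The stellar subdivision of a fan `F` at the cone `σ` with new ray `v`:
cones not containing `σ` are kept, and each cone `τ ⊇ σ` is replaced by the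
joins of `v` with the faces of `τ` not containing `σ`. -/
def stellarSub {E : Type*} [AddCommMonoid E] [Module ℝ E]
    (F : Set (Set E)) (σ : Set E) (v : E) : Set (Set E) :=
  {τ | τ ∈ F ∧ ¬ σ ⊆ τ} ∪
  {D | ∃ τ ∈ F, σ ⊆ τ ∧ ∃ c ∈ F, c ⊆ τ ∧ ¬ σ ⊆ c ∧ D = rayJoin v c}

/-- The combinatorial blowup `Bl_X(L)` of a finite meet-semilattice
`L` at `X ∈ L \ {⊥}` is again a meet-semilattice. -/
lemma exists_isLUB_pair_of_bddAbove {L : Type*} [SemilatticeInf L] [Fintype L]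
    (m X j : L) (hm : m ≤ j) (hX : X ≤ j) : ∃ k, IsLUB {m, X} k := by
  classical
  set U : Finset L := Finset.univ.filter (fun u => m ≤ u ∧ X ≤ u) with hU
  have hj : j ∈ U := by simp [hU, hm, hX]
  have hne : U.Nonempty := ⟨j, hj⟩
  refine ⟨U.inf' hne id, ?_, ?_⟩
  · rintro x (rfl | rfl) <;>
    · apply Finset.le_inf'
      intro u hu
      simp only [hU, Finset.mem_filter] at hu
      simp [hu.2.1, hu.2.2]
  · intro u hu
    have h1 : m ≤ u := hu (by simp)
    have h2 : X ≤ u := hu (by simp)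
    have : u ∈ U := by simp [hU, h1, h2]
    exact Finset.inf'_le id this

theorem stmt2 (L : Type*) [SemilatticeInf L] [OrderBot L] [Fintype L]
    (X : L) (hX : X ≠ ⊥) :
    ∀ a b : Bl X, ∃ c : Bl X, IsGLB {a, b} c := by
  rintro ⟨⟨Y, ba⟩, hYa, hja⟩ ⟨⟨Z, bb⟩, hZb, hjb⟩
  refine ⟨⟨(Y ⊓ Z, ba && bb), fun h => hYa (h.trans inf_le_left), ?_⟩, ?_, ?_⟩
  · intro hb
    obtain ⟨hba, _⟩ := Bool.and_eq_true_iff.mp hb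
    obtain ⟨j, hj⟩ := hja hba
    exact exists_isLUB_pair_of_bddAbove (Y ⊓ Z) X j
      (inf_le_left.trans (hj.1 (by simp))) (hj.1 (by simp))
  · rintro x (rfl | rfl) <;>
    · refine Subtype.mk_le_mk.mpr (Prod.mk_le_mk.mpr ⟨by simp, ?_⟩)
      first
      | exact Bool.and_le_left ba bb
      | exact Bool.and_le_right ba bb
  · rintro ⟨⟨W, bw⟩, hW, hjw⟩ hlb
    have h1 := hlb (Set.mem_insert _ _)
    have h2 := hlb (Set.mem_insert_of_mem _ rfl)
    replace h1 := Prod.mk_le_mk.mp (Subtype.mk_le_mk.mp h1)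
    replace h2 := Prod.mk_le_mk.mp (Subtype.mk_le_mk.mp h2)
    exact Subtype.mk_le_mk.mpr (Prod.mk_le_mk.mpr
      ⟨le_inf h1.1 h2.1, by
        cases ba <;> cases bb <;> cases bw <;> simp_all⟩)
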